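/- Let F_q be a finite field of characteristic p, let n be an odd prime different from p, let K be a field extension of F_q containing a primitive n-th root of unity ζ, and let k* be the integer nearest to n/4 (that is, k* = k if n = 4k + 1 and k* = k + 1 if n = 4k + 3). Then ∏_{m=1}^{n−1} ( Σ_{i ∈ NR(n)} ζ^{i·m} ) = (k*)^{(n−1)/2}, where k* on the right-hand side is interpreted via the natural-number cast into K. -/

import Mathlib

open Polynomial
open scoped Classical

section AuxStmt9

variable {n : ℕ} [Fact n.Prime]

private lemma auxNZ9 {t : ZMod n} (ht : ¬ IsSquare t) : t ≠ 0 := by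
  rintro rfl
  exact ht ⟨0, (mul_zero 0).symm⟩

private lemma auxSqMul9 {a b : ZMod n} (ha : a ≠ 0) (hb : b ≠ 0) :
    IsSquare (a * b) ↔ (IsSquare a ↔ IsSquare b) := by
  constructor
  · intro h
    constructor
    · intro Ha
      have hb' : b = a⁻¹ * (a * b) := by field_simp
      rw [hb']
      exact Ha.inv.mul h
    · intro Hb
      have ha' : a = (a * b) * b⁻¹ := by field_simp
      rw [ha']
      exact h.mul Hb.inv
  · intro h
    by_cases Ha : IsSquare a
    · exact Ha.mul (h.mp Ha)
    · have Hb : ¬ IsSquare b := fun hb => Ha (h.mpr hb)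
      have h1 : quadraticChar (ZMod n) (a * b) = 1 := by
        rw [map_mul, quadraticChar_neg_one_iff_not_isSquare.mpr Ha,
          quadraticChar_neg_one_iff_not_isSquare.mpr Hb]
        ring
      exact (quadraticChar_one_iff_isSquare (mul_ne_zero ha hb)).mp h1

end AuxStmt9

set_option maxHeartbeats 2000000 in
/-- The eigenvalue product computation in the proof of Theorem 2: for an odd prime
`n ≠ p` and a primitive `n`-th root of unity `ζ` in an extension `K` of `F_q`,
`∏_{m=1}^{n-1} (∑_{i ∈ NR(n)} ζ^(i m)) = (k*)^((n-1)/2)`, where `k*` is the integer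
nearest to `n/4`. -/
theorem stmt9 {F K : Type*} [Field F] [Fintype F] [Field K] [Algebra F K]
    (p n k : ℕ) [Fact p.Prime] [CharP F p]
    (hn : n.Prime) (hn2 : n ≠ 2) (hnp : n ≠ p)
    (ζ : K) (hζ : IsPrimitiveRoot ζ n)
    (hk : (n % 4 = 1 ∧ k = n / 4) ∨ (n % 4 = 3 ∧ k = n / 4 + 1)) :
    ∏ m ∈ Finset.Ico 1 n,
      (∑ i ∈ (Finset.Ico 1 n).filter (fun i : ℕ => ¬ IsSquare ((i : ZMod n))),
        ζ ^ (i * m)) = (k : K) ^ ((n - 1) / 2) := by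
  haveI hfact : Fact n.Prime := ⟨hn⟩
  haveI : NeZero n := ⟨hn.pos.ne'⟩
  have hn1 : 1 < n := hn.one_lt
  have hn3 : 3 ≤ n := by have h2 := hn.two_le; omega
  have hnodd : n % 2 = 1 := Nat.odd_iff.mp (hn.odd_of_ne_two hn2)
  set ψ : AddChar (ZMod n) K := AddChar.zmodChar n hζ.pow_eq_one with hψdef
  have hψa : ∀ a : ℕ, ψ (a : ZMod n) = ζ ^ a := fun a => AddChar.zmodChar_apply' _ a
  set S : Finset (ZMod n) := Finset.univ.filter (fun t => ¬ IsSquare t) with hSdef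
  set Q : Finset (ZMod n) := Finset.univ.filter (fun t => t ≠ 0 ∧ IsSquare t) with hQdef
  set η : K := ∑ t ∈ S, ψ t with hηdef
  set η' : K := ∑ t ∈ Q, ψ t with hη'def
  have hmemS : ∀ t : ZMod n, t ∈ S ↔ ¬ IsSquare t := by
    intro t; simp [hSdef]
  have hmemQ : ∀ t : ZMod n, t ∈ Q ↔ t ≠ 0 ∧ IsSquare t := by
    intro t; simp [hQdef]
  -- sums over `S` scaled by a unit
  have hGS : ∀ u : ZMod n, u ≠ 0 → IsSquare u → (∑ t ∈ S, ψ (t * u)) = η := by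
    intro u hu hsu
    refine Finset.sum_nbij' (fun t => t * u) (fun t => t * u⁻¹) ?_ ?_ ?_ ?_ fun a _ => rfl
    · intro a ha
      rw [hmemS] at ha ⊢
      intro hsq
      exact ha (((auxSqMul9 (auxNZ9 ha) hu).mp hsq).mpr hsu)
    · intro a ha
      rw [hmemS] at ha ⊢
      intro hsq
      exact ha (((auxSqMul9 (auxNZ9 ha) (inv_ne_zero hu)).mp hsq).mpr hsu.inv)
    · intro a _; field_simp
    · intro a _; field_simp
  have hGN : ∀ u : ZMod n, ¬ IsSquare u → (∑ t ∈ S, ψ (t * u)) = η' := by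
    intro u hu
    have hu0 : u ≠ 0 := auxNZ9 hu
    refine Finset.sum_nbij' (fun t => t * u) (fun t => t * u⁻¹) ?_ ?_ ?_ ?_ fun a _ => rfl
    · intro a ha
      rw [hmemS] at ha
      rw [hmemQ]
      exact ⟨mul_ne_zero (auxNZ9 ha) hu0, (auxSqMul9 (auxNZ9 ha) hu0).mpr (iff_of_false ha hu)⟩
    · intro a ha
      rw [hmemQ] at ha
      rw [hmemS]
      intro hsq
      have h1 : IsSquare u⁻¹ := ((auxSqMul9 ha.1 (inv_ne_zero hu0)).mp hsq).mp ha.2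
      have h2 : IsSquare u := by simpa using h1.inv
      exact hu h2
    · intro a _; field_simp
    · intro a _; field_simp
  -- cardinalities
  have hcardEq : S.card = Q.card := by
    obtain ⟨c, hc⟩ := FiniteField.exists_nonsquare (F := ZMod n)
      (by rw [ZMod.ringChar_zmod_n]; exact hn2)
    have hc0 : c ≠ 0 := auxNZ9 hc
    refine Finset.card_nbij' (fun t => t * c) (fun t => t * c⁻¹) ?_ ?_ ?_ ?_
    · intro a ha
      rw [Finset.mem_coe, hmemS] at ha
      rw [Finset.mem_coe, hmemQ]
      exact ⟨mul_ne_zero (auxNZ9 ha) hc0, (auxSqMul9 (auxNZ9 ha) hc0).mpr (iff_of_false ha hc)⟩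
    · intro a ha
      rw [Finset.mem_coe, hmemQ] at ha
      rw [Finset.mem_coe, hmemS]
      intro hsq
      have h1 : IsSquare c⁻¹ := ((auxSqMul9 ha.1 (inv_ne_zero hc0)).mp hsq).mp ha.2
      exact hc (by simpa using h1.inv)
    · intro a _; field_simp
    · intro a _; field_simp
  have hdisj : Disjoint Q S := by
    rw [Finset.disjoint_left]
    intro a haQ haS
    rw [hmemQ] at haQ
    rw [hmemS] at haS
    exact haS haQ.2
  have hunion : Q ∪ S = Finset.univ.filter (fun t : ZMod n => t ≠ 0) := by
    ext t
    simp only [Finset.mem_union, hmemQ, hmemS, Finset.mem_filter, Finset.mem_univ, true_and]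
    constructor
    · rintro (⟨h1, _⟩ | h)
      · exact h1
      · exact auxNZ9 h
    · intro h; by_cases hs : IsSquare t
      · exact Or.inl ⟨h, hs⟩
      · exact Or.inr hs
  have hcardSum : Q.card + S.card = n - 1 := by
    rw [← Finset.card_union_of_disjoint hdisj, hunion, Finset.filter_ne',
      Finset.card_erase_of_mem (Finset.mem_univ 0), Finset.card_univ, ZMod.card]
  have hScard : S.card = (n - 1) / 2 := by omega
  have hQcard : Q.card = (n - 1) / 2 := by omega
  -- η + η' = -1
  have hψne : ψ ≠ 1 := by
    intro h
    have h1 : ψ ((1 : ℕ) : ZMod n) = 1 := by rw [h]; rfl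
    rw [hψa 1, pow_one] at h1
    exact hζ.ne_one hn1 h1
  have hsumall : ∑ t : ZMod n, ψ t = 0 := AddChar.sum_eq_zero_of_ne_one hψne
  have huniv : (Finset.univ : Finset (ZMod n)) = insert 0 (Q ∪ S) := by
    ext t
    simp only [Finset.mem_univ, true_iff, Finset.mem_insert, Finset.mem_union, hmemQ, hmemS]
    by_cases h0 : t = 0
    · exact Or.inl h0
    · by_cases hs : IsSquare t
      · exact Or.inr (Or.inl ⟨h0, hs⟩)
      · exact Or.inr (Or.inr hs)
  have h0notin : (0 : ZMod n) ∉ Q ∪ S := by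
    simp only [Finset.mem_union, hmemQ, hmemS]
    push_neg
    exact ⟨fun h => absurd rfl h, ⟨0, (mul_zero 0).symm⟩⟩
  have hsum : η + η' = -1 := by
    have h1 : ∑ t : ZMod n, ψ t = ψ 0 + (η' + η) := by
      rw [huniv, Finset.sum_insert h0notin, Finset.sum_union hdisj]
    rw [hsumall, AddChar.map_zero_eq_one] at h1
    linear_combination -h1
  -- rewrite the goal
  have hinner : ∀ (inst : DecidablePred fun i : ℕ => ¬ IsSquare ((i : ZMod n))),
      ∀ m ∈ Finset.Ico 1 n,
      (∑ i ∈ @Finset.filter _ (fun i : ℕ => ¬ IsSquare ((i : ZMod n))) inst (Finset.Ico 1 n),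
        ζ ^ (i * m)) = ∑ t ∈ S, ψ (t * (m : ZMod n)) := by
    intro inst m _
    refine Finset.sum_nbij' (fun i : ℕ => (i : ZMod n)) (fun t => t.val) ?_ ?_ ?_ ?_ ?_
    · intro a ha
      rw [Finset.mem_filter] at ha
      rw [hmemS]
      exact ha.2
    · intro t ht
      rw [hmemS] at ht
      have ht0 : t ≠ 0 := auxNZ9 ht
      have hv0 : t.val ≠ 0 := by
        intro h
        apply ht0
        have := ZMod.natCast_zmod_val t
        rw [h] at this
        simpa using this.symm
      rw [Finset.mem_filter, Finset.mem_Ico]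
      refine ⟨⟨Nat.one_le_iff_ne_zero.mpr hv0, ZMod.val_lt t⟩, ?_⟩
      rw [ZMod.natCast_zmod_val]
      exact ht
    · intro a ha
      rw [Finset.mem_filter, Finset.mem_Ico] at ha
      exact ZMod.val_cast_of_lt ha.1.2
    · intro t _
      exact ZMod.natCast_zmod_val t
    · intro a _
      rw [← Nat.cast_mul, hψa]
  refine (Finset.prod_congr rfl (hinner _)).trans ?_
  have houter : ∏ m ∈ Finset.Ico 1 n, (∑ t ∈ S, ψ (t * (m : ZMod n)))
      = ∏ u ∈ Finset.univ.filter (fun u : ZMod n => u ≠ 0), ∑ t ∈ S, ψ (t * u) := by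
    refine Finset.prod_nbij' (fun i : ℕ => (i : ZMod n)) (fun u => u.val) ?_ ?_ ?_ ?_ ?_
    · intro a ha
      rw [Finset.mem_Ico] at ha
      rw [Finset.mem_filter]
      refine ⟨Finset.mem_univ _, ?_⟩
      intro h0
      have h0' : ((a : ℕ) : ZMod n) = 0 := h0
      have hva := ZMod.val_cast_of_lt ha.2
      rw [h0', ZMod.val_zero] at hva
      omega
    · intro u hu
      rw [Finset.mem_filter] at hu
      have hv0 : u.val ≠ 0 := by
        intro h
        apply hu.2
        have := ZMod.natCast_zmod_val u
        rw [h] at this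
        simpa using this.symm
      rw [Finset.mem_Ico]
      exact ⟨Nat.one_le_iff_ne_zero.mpr hv0, ZMod.val_lt u⟩
    · intro a ha
      rw [Finset.mem_Ico] at ha
      exact ZMod.val_cast_of_lt ha.2
    · intro u _
      exact ZMod.natCast_zmod_val u
    · intro a _; rfl
  rw [houter, ← hunion, Finset.prod_union hdisj]
  have hProdQ : ∏ u ∈ Q, (∑ t ∈ S, ψ (t * u)) = η ^ ((n - 1) / 2) := by
    have h1 : ∀ u ∈ Q, (∑ t ∈ S, ψ (t * u)) = η := by
      intro u hu
      rw [hmemQ] at hu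
      exact hGS u hu.1 hu.2
    rw [Finset.prod_congr rfl h1, Finset.prod_const, hQcard]
  have hProdS : ∏ u ∈ S, (∑ t ∈ S, ψ (t * u)) = η' ^ ((n - 1) / 2) := by
    have h1 : ∀ u ∈ S, (∑ t ∈ S, ψ (t * u)) = η' := by
      intro u hu
      rw [hmemS] at hu
      exact hGN u hu
    rw [Finset.prod_congr rfl h1, Finset.prod_const, hScard]
  rw [hProdQ, hProdS, ← mul_pow]
  -- now compute η * η'
  by_cases hp2 : p = 2
  · -- characteristic 2 : use the Frobenius
    subst hp2
    haveI : CharP K 2 := charP_of_injective_algebraMap (algebraMap F K).injective 2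
    have h2cast : ((2 : ℕ) : K) = 0 := CharP.cast_eq_zero K 2
    have h20 : (2 : ZMod n) ≠ 0 := by
      intro h
      have h' : ((2 : ℕ) : ZMod n) = 0 := by push_cast; exact h
      rw [ZMod.natCast_eq_zero_iff] at h'
      exact hn2 ((Nat.prime_dvd_prime_iff_eq hn Nat.prime_two).mp h')
    have hfrob : η ^ 2 = ∑ t ∈ S, ψ (t * 2) := by
      haveI : ExpChar K 2 := ExpChar.prime Nat.prime_two
      rw [hηdef, sum_pow_char]
      refine Finset.sum_congr rfl fun t _ => ?_
      rw [sq, ← AddChar.map_add_eq_mul, mul_two]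
    have hη'eq : η' = -1 - η := by linear_combination hsum
    by_cases h2sq : IsSquare (2 : ZMod n)
    · have hn8 : n % 8 = 1 ∨ n % 8 = 7 := (ZMod.exists_sq_eq_two_iff (p := n) hn2).mp h2sq
      have hkeven : k % 2 = 0 := by omega
      have hk0 : (k : K) = 0 := by
        obtain ⟨j, hj⟩ : ∃ j, k = 2 * j := ⟨k / 2, by omega⟩
        calc (k : K) = ((2 : ℕ) : K) * (j : K) := by rw [hj]; push_cast; ring
        _ = 0 := by rw [h2cast, zero_mul]
      have hsq2 : η ^ 2 = η := by rw [hfrob, hGS 2 h20 h2sq]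
      have hee : η * η' = 0 := by
        calc η * η' = -(η ^ 2) - η := by rw [hη'eq]; ring
        _ = -(((2 : ℕ) : K) * η) := by rw [hsq2]; push_cast; ring
        _ = 0 := by rw [h2cast, zero_mul, neg_zero]
      have hepos : (n - 1) / 2 ≠ 0 := by omega
      rw [hee, hk0]
    · have hn8 : ¬(n % 8 = 1 ∨ n % 8 = 7) := fun h =>
        h2sq ((ZMod.exists_sq_eq_two_iff (p := n) hn2).mpr h)
      have hkodd : k % 2 = 1 := by omega
      have hk1 : (k : K) = 1 := by
        obtain ⟨j, hj⟩ : ∃ j, k = 2 * j + 1 := ⟨k / 2, by omega⟩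
        calc (k : K) = ((2 : ℕ) : K) * (j : K) + 1 := by rw [hj]; push_cast; ring
        _ = 1 := by rw [h2cast, zero_mul, zero_add]
      have hsq2 : η ^ 2 = η' := by rw [hfrob, hGN 2 h2sq]
      have hee : η * η' = 1 := by
        calc η * η' = -(η ^ 2) - η := by rw [hη'eq]; ring
        _ = -(η + η') := by rw [hsq2]; ring
        _ = 1 := by rw [hsum]; norm_num
      rw [hee, hk1]
  · -- characteristic ≠ 2 : use the Gauss sum
    haveI : CharP K p := charP_of_injective_algebraMap (algebraMap F K).injective p
    have h2K : (2 : K) ≠ 0 := by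
      intro h
      have h' : ((2 : ℕ) : K) = 0 := by push_cast; exact h
      rw [CharP.cast_eq_zero_iff K p] at h'
      exact hp2 ((Nat.prime_dvd_prime_iff_eq Fact.out Nat.prime_two).mp h')
    have h4K : (4 : K) ≠ 0 := by
      have : (4 : K) = 2 * 2 := by norm_num
      rw [this]
      exact mul_ne_zero h2K h2K
    set χ : MulChar (ZMod n) K := (quadraticChar (ZMod n)).ringHomComp (Int.castRingHom K)
      with hχdef
    have hχval1 : ∀ {a : ZMod n}, a ≠ 0 → IsSquare a → χ a = 1 := by
      intro a ha hsa
      rw [hχdef, MulChar.ringHomComp_apply, (quadraticChar_one_iff_isSquare ha).mpr hsa]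
      simp
    have hχvalm : ∀ {a : ZMod n}, ¬ IsSquare a → χ a = -1 := by
      intro a ha
      rw [hχdef, MulChar.ringHomComp_apply, quadraticChar_neg_one_iff_not_isSquare.mpr ha]
      simp
    have hχ0 : χ 0 = 0 := by
      rw [hχdef, MulChar.ringHomComp_apply, quadraticChar_zero]
      simp
    have hm1K : (-1 : K) ≠ 1 := by
      intro h
      apply h2K
      linear_combination -h
    have hχ1 : χ ≠ 1 := by
      obtain ⟨c, hc⟩ := FiniteField.exists_nonsquare (F := ZMod n)
        (by rw [ZMod.ringChar_zmod_n]; exact hn2)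
      rw [MulChar.ne_one_iff]
      refine ⟨Units.mk0 c (auxNZ9 hc), ?_⟩
      have : χ ((Units.mk0 c (auxNZ9 hc) : (ZMod n)ˣ) : ZMod n) = -1 := hχvalm hc
      rw [this]
      exact hm1K
    have hquad : χ.IsQuadratic := (quadraticChar_isQuadratic (ZMod n)).comp _
    have hprim : ψ.IsPrimitive := AddChar.zmodChar_primitive_of_primitive_root n hζ
    have hgs : gaussSum χ ψ = η' - η := by
      have hdef : gaussSum χ ψ = ∑ a : ZMod n, χ a * ψ a := rfl
      rw [hdef, huniv, Finset.sum_insert h0notin, Finset.sum_union hdisj, hχ0, zero_mul,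
        zero_add]
      have hQpart : ∑ a ∈ Q, χ a * ψ a = η' := by
        refine Finset.sum_congr rfl fun a ha => ?_
        rw [hmemQ] at ha
        rw [hχval1 ha.1 ha.2, one_mul]
      have hSpart : ∑ a ∈ S, χ a * ψ a = -η := by
        rw [hηdef, ← Finset.sum_neg_distrib]
        refine Finset.sum_congr rfl fun a ha => ?_
        rw [hmemS] at ha
        rw [hχvalm ha, neg_one_mul]
      rw [hQpart, hSpart]
      ring
    have hg2 : (η' - η) ^ 2 = χ (-1) * (n : K) := by
      have := gaussSum_sq hχ1 hquad hprim
      rw [hgs, ZMod.card] at this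
      exact this
    have hkey : (4 : K) * (η * η') = 1 - χ (-1) * (n : K) := by
      rw [← hg2]
      linear_combination (η + η' - 1) * hsum
    have hm1ne : (-1 : ZMod n) ≠ 0 := by
      simp
    rcases hk with ⟨h4, hkv⟩ | ⟨h4, hkv⟩
    · -- n ≡ 1 (mod 4)
      have hsqm1 : IsSquare (-1 : ZMod n) :=
        (ZMod.exists_sq_eq_neg_one_iff (p := n)).mpr (by omega)
      rw [hχval1 hm1ne hsqm1, one_mul] at hkey
      have h4k : 4 * k + 1 = n := by omega
      have hncast : (n : K) = 4 * (k : K) + 1 := by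
        rw [← h4k]; push_cast; ring
      have hee : η * η' = -(k : K) := by
        apply mul_left_cancel₀ h4K
        rw [hkey, hncast]
        ring
      rw [hee]
      have heven : Even ((n - 1) / 2) := ⟨k, by omega⟩
      rw [heven.neg_pow]
    · -- n ≡ 3 (mod 4)
      have hsqm1 : ¬ IsSquare (-1 : ZMod n) := by
        intro h
        have := (ZMod.exists_sq_eq_neg_one_iff (p := n)).mp h
        omega
      rw [hχvalm hsqm1] at hkey
      have h4k : 4 * k = n + 1 := by omega
      have hncast : (n : K) = 4 * (k : K) - 1 := by
        have : ((4 * k : ℕ) : K) = ((n + 1 : ℕ) : K) := by rw [h4k]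
        push_cast at this
        linear_combination -this
      have hee : η * η' = (k : K) := by
        apply mul_left_cancel₀ h4K
        rw [hkey, hncast]
        ring
      rw [hee]
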